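/- arXiv:2112.08065 — 2 statements merged into one kernel-verified Lean document; each statement's English description precedes it below -/
import Mathlib

section
/- Let F_T(u,v) ∈ ℤ[μ1, μ2, μ3, μ4, μ6][[u,v]] be the Tate formal group. Then the partial derivative of F_T(u,v) with respect to v evaluated at v = 0 equals 1 − μ1·u − μ2·u² − 2μ3·s(u) − 2μ4·u·s(u) − 3μ6·s(u)², where s(u) is the Tate coordinate series. -/
noncomputable section

/-- The polynomial ring `ℤ[μ₁, μ₂, μ₃, μ₄, μ₆]`. -/
abbrev Rmu : Type := MvPolynomial (Fin 5) ℤ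

def mu1 : Rmu := MvPolynomial.X 0
def mu2 : Rmu := MvPolynomial.X 1
def mu3 : Rmu := MvPolynomial.X 2
def mu4 : Rmu := MvPolynomial.X 3
def mu6 : Rmu := MvPolynomial.X 4

/-- The Tate equation `s = u³ + μ₁us + μ₂u²s + μ₃s² + μ₄us² + μ₆s³`. -/
def tateEq (s : PowerSeries Rmu) : Prop :=
  s = PowerSeries.X ^ 3 + PowerSeries.C (R := Rmu) mu1 * PowerSeries.X * s
    + PowerSeries.C (R := Rmu) mu2 * PowerSeries.X ^ 2 * s + PowerSeries.C (R := Rmu) mu3 * s ^ 2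
    + PowerSeries.C (R := Rmu) mu4 * PowerSeries.X * s ^ 2 + PowerSeries.C (R := Rmu) mu6 * s ^ 3

/-- A one-variable power series `f`, viewed as a multivariable power series
in the single variable `i`:  `f(x_i)`. -/
def onVar {R : Type*} [CommRing R] {σ : Type*} [DecidableEq σ] (i : σ) (f : PowerSeries R) :
    MvPowerSeries σ R :=
  fun d => if d = Finsupp.single i (d i) then PowerSeries.coeff (R := R) (d i) f else 0

/-- The exponent vector of the monomial `u^i v^j`. -/
def ee (i j : ℕ) : Fin 2 →₀ ℕ := Finsupp.single 0 i + Finsupp.single 1 j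

/-- `W = 1 − μ₃k − μ₆k²`. -/
def Wk (k : MvPowerSeries (Fin 2) Rmu) : MvPowerSeries (Fin 2) Rmu :=
  1 - MvPowerSeries.C (σ := Fin 2) (R := Rmu) mu3 * k - MvPowerSeries.C (σ := Fin 2) (R := Rmu) mu6 * k ^ 2

/-- `Q(m) = 1 + μ₂m + μ₄m² + μ₆m³`. -/
def Qm (m : MvPowerSeries (Fin 2) Rmu) : MvPowerSeries (Fin 2) Rmu :=
  1 + MvPowerSeries.C (σ := Fin 2) (R := Rmu) mu2 * m + MvPowerSeries.C (σ := Fin 2) (R := Rmu) mu4 * m ^ 2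
    + MvPowerSeries.C (σ := Fin 2) (R := Rmu) mu6 * m ^ 3

/-- `P = μ₁ + μ₃m + (μ₄ + 2μ₆m)k`. -/
def Pmk (m k : MvPowerSeries (Fin 2) Rmu) : MvPowerSeries (Fin 2) Rmu :=
  MvPowerSeries.C (σ := Fin 2) (R := Rmu) mu1 + MvPowerSeries.C (σ := Fin 2) (R := Rmu) mu3 * m
    + (MvPowerSeries.C (σ := Fin 2) (R := Rmu) mu4 + 2 * MvPowerSeries.C (σ := Fin 2) (R := Rmu) mu6 * m) * k

namespace Stmt16

lemma ee_apply0 (i j : ℕ) : ee i j 0 = i := by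
  simp [ee, Finsupp.single_apply]

lemma ee_apply1 (i j : ℕ) : ee i j 1 = j := by
  simp [ee, Finsupp.single_apply]

lemma fin2_eq (d : Fin 2 →₀ ℕ) : ee (d 0) (d 1) = d := by
  ext x
  fin_cases x <;> simp [ee, Finsupp.single_apply]

lemma ee_add (i j a b : ℕ) : ee i a + ee j b = ee (i + j) (a + b) := by
  simp only [ee, Finsupp.single_add]
  abel

def sl (j : ℕ) (f : MvPowerSeries (Fin 2) Rmu) : PowerSeries Rmu :=
  PowerSeries.mk fun n => MvPowerSeries.coeff (R := Rmu) (ee n j) f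

lemma coeff_sl (j n : ℕ) (f : MvPowerSeries (Fin 2) Rmu) :
    PowerSeries.coeff (R := Rmu) n (sl j f) = MvPowerSeries.coeff (R := Rmu) (ee n j) f :=
  PowerSeries.coeff_mk _ _

lemma coeff_ee_mul (f g : MvPowerSeries (Fin 2) Rmu) (n c : ℕ) :
    MvPowerSeries.coeff (R := Rmu) (ee n c) (f * g)
      = ∑ p ∈ Finset.HasAntidiagonal.antidiagonal n, ∑ q ∈ Finset.HasAntidiagonal.antidiagonal c,
          MvPowerSeries.coeff (R := Rmu) (ee p.1 q.1) f * MvPowerSeries.coeff (R := Rmu) (ee p.2 q.2) g := by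
  rw [MvPowerSeries.coeff_mul]
  have hprod := Finset.sum_product' (s := Finset.HasAntidiagonal.antidiagonal n) (t := Finset.HasAntidiagonal.antidiagonal c)
    (f := fun p q => MvPowerSeries.coeff (R := Rmu) (ee p.1 q.1) f * MvPowerSeries.coeff (R := Rmu) (ee p.2 q.2) g)
  rw [← hprod]
  refine Finset.sum_nbij' (fun p => ((p.1 0, p.2 0), (p.1 1, p.2 1)))
    (fun x => (ee x.1.1 x.2.1, ee x.1.2 x.2.2)) ?_ ?_ ?_ ?_ ?_
  · intro p hp
    rw [Finset.HasAntidiagonal.mem_antidiagonal] at hp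
    have h0 := DFunLike.congr_fun hp 0
    have h1 := DFunLike.congr_fun hp 1
    simp only [Finsupp.add_apply, ee_apply0, ee_apply1] at h0 h1
    simp [Finset.mem_product, Finset.HasAntidiagonal.mem_antidiagonal, h0, h1]
  · intro x hx
    simp only [Finset.mem_product, Finset.HasAntidiagonal.mem_antidiagonal] at hx
    rw [Finset.HasAntidiagonal.mem_antidiagonal, ee_add, hx.1, hx.2]
  · intro p hp
    ext : 1 <;> simp [fin2_eq]
  · intro x hx
    ext : 2 <;> simp [ee_apply0, ee_apply1]
  · intro p hp
    rw [fin2_eq, fin2_eq]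

lemma sl_sub (j : ℕ) (f g : MvPowerSeries (Fin 2) Rmu) : sl j (f - g) = sl j f - sl j g := by
  ext n; simp [coeff_sl]

lemma sl_add (j : ℕ) (f g : MvPowerSeries (Fin 2) Rmu) : sl j (f + g) = sl j f + sl j g := by
  ext n; simp [coeff_sl]

lemma sl0_mul (f g : MvPowerSeries (Fin 2) Rmu) : sl 0 (f * g) = sl 0 f * sl 0 g := by
  ext n
  rw [coeff_sl, PowerSeries.coeff_mul, coeff_ee_mul]
  simp [coeff_sl]

lemma sl1_mul (f g : MvPowerSeries (Fin 2) Rmu) :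
    sl 1 (f * g) = sl 0 f * sl 1 g + sl 1 f * sl 0 g := by
  ext n
  rw [coeff_sl, coeff_ee_mul]
  have h1 : (Finset.HasAntidiagonal.antidiagonal (1 : ℕ)) = {(0, 1), (1, 0)} := rfl
  simp only [h1, Finset.sum_insert, Finset.mem_singleton, Finset.sum_singleton]
  simp [PowerSeries.coeff_mul, coeff_sl, Finset.sum_add_distrib]

lemma sl0_one : sl 0 (1 : MvPowerSeries (Fin 2) Rmu) = 1 := by
  ext n
  rw [coeff_sl, MvPowerSeries.coeff_one, PowerSeries.coeff_one]
  have : ee n 0 = 0 ↔ n = 0 := by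
    constructor
    · intro h; have := DFunLike.congr_fun h 0; simpa [ee_apply0] using this
    · rintro rfl; ext x; fin_cases x <;> simp [ee, Finsupp.single_apply]
  simp [this]

lemma sl1_one : sl 1 (1 : MvPowerSeries (Fin 2) Rmu) = 0 := by
  ext n
  rw [coeff_sl, MvPowerSeries.coeff_one]
  have : ¬ (ee n 1 = 0) := by
    intro h; have := DFunLike.congr_fun h 1; simp [ee_apply1] at this
  simp [this]

lemma sl0_C (a : Rmu) : sl 0 (MvPowerSeries.C (σ := Fin 2) (R := Rmu) a) = PowerSeries.C (R := Rmu) a := by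
  ext n
  rw [coeff_sl, MvPowerSeries.coeff_C, PowerSeries.coeff_C]
  have : ee n 0 = 0 ↔ n = 0 := by
    constructor
    · intro h; have := DFunLike.congr_fun h 0; simpa [ee_apply0] using this
    · rintro rfl; ext x; fin_cases x <;> simp [ee, Finsupp.single_apply]
  simp [this]

lemma sl1_C (a : Rmu) : sl 1 (MvPowerSeries.C (σ := Fin 2) (R := Rmu) a) = 0 := by
  ext n
  rw [coeff_sl, MvPowerSeries.coeff_C]
  have : ¬ (ee n 1 = 0) := by
    intro h; have := DFunLike.congr_fun h 1; simp [ee_apply1] at this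
  simp [this]

lemma sl0_X0 : sl 0 (MvPowerSeries.X (0 : Fin 2) : MvPowerSeries (Fin 2) Rmu) = PowerSeries.X := by
  ext n
  rw [coeff_sl, MvPowerSeries.coeff_X, PowerSeries.coeff_X]
  have : ee n 0 = Finsupp.single (0 : Fin 2) 1 ↔ n = 1 := by
    constructor
    · intro h; have := DFunLike.congr_fun h 0; simpa [ee_apply0, Finsupp.single_apply] using this
    · rintro rfl; ext x; fin_cases x <;> simp [ee, Finsupp.single_apply]
  simp [this]

lemma sl1_X0 : sl 1 (MvPowerSeries.X (0 : Fin 2) : MvPowerSeries (Fin 2) Rmu) = 0 := by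
  ext n
  rw [coeff_sl, MvPowerSeries.coeff_X]
  have : ¬ (ee n 1 = Finsupp.single (0 : Fin 2) 1) := by
    intro h; have := DFunLike.congr_fun h 1; simp [ee_apply1, Finsupp.single_apply] at this
  simp [this]

lemma sl0_X1 : sl 0 (MvPowerSeries.X (1 : Fin 2) : MvPowerSeries (Fin 2) Rmu) = 0 := by
  ext n
  rw [coeff_sl, MvPowerSeries.coeff_X]
  have : ¬ (ee n 0 = Finsupp.single (1 : Fin 2) 1) := by
    intro h; have := DFunLike.congr_fun h 1; simp [ee_apply1, Finsupp.single_apply] at this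
  simp [this]

lemma sl1_X1 : sl 1 (MvPowerSeries.X (1 : Fin 2) : MvPowerSeries (Fin 2) Rmu) = 1 := by
  ext n
  rw [coeff_sl, MvPowerSeries.coeff_X, PowerSeries.coeff_one]
  have : ee n 1 = Finsupp.single (1 : Fin 2) 1 ↔ n = 0 := by
    constructor
    · intro h; have := DFunLike.congr_fun h 0; simpa [ee_apply0, Finsupp.single_apply] using this
    · rintro rfl; ext x; fin_cases x <;> simp [ee, Finsupp.single_apply]
  simp [this]

lemma sl0_ov0 (f : PowerSeries Rmu) : sl 0 (onVar (0 : Fin 2) f) = f := by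
  refine PowerSeries.ext fun n => ?_
  rw [coeff_sl, MvPowerSeries.coeff_apply]
  show (if ee n 0 = Finsupp.single (0 : Fin 2) (ee n 0 0) then
    PowerSeries.coeff (R := Rmu) (ee n 0 0) f else 0) = _
  rw [ee_apply0]
  have : ee n 0 = Finsupp.single (0 : Fin 2) n := by
    ext x; fin_cases x <;> simp [ee, Finsupp.single_apply]
  simp [this]

lemma sl1_ov0 (f : PowerSeries Rmu) : sl 1 (onVar (0 : Fin 2) f) = 0 := by
  refine PowerSeries.ext fun n => ?_
  rw [coeff_sl, MvPowerSeries.coeff_apply]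
  show (if ee n 1 = Finsupp.single (0 : Fin 2) (ee n 1 0) then
    PowerSeries.coeff (R := Rmu) (ee n 1 0) f else 0) = _
  have : ¬ (ee n 1 = Finsupp.single (0 : Fin 2) (ee n 1 0)) := by
    intro h; have := DFunLike.congr_fun h 1; simp [ee_apply1, Finsupp.single_apply] at this
  simp [this]

lemma sl0_ov1 (f : PowerSeries Rmu) :
    sl 0 (onVar (1 : Fin 2) f) = PowerSeries.C (R := Rmu) (PowerSeries.coeff (R := Rmu) 0 f) := by
  refine PowerSeries.ext fun n => ?_
  rw [coeff_sl, PowerSeries.coeff_C, MvPowerSeries.coeff_apply]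
  show (if ee n 0 = Finsupp.single (1 : Fin 2) (ee n 0 1) then
    PowerSeries.coeff (R := Rmu) (ee n 0 1) f else 0) = _
  rw [ee_apply1, Finsupp.single_zero]
  have hiff : ee n 0 = 0 ↔ n = 0 := by
    constructor
    · intro h; have := DFunLike.congr_fun h 0; simpa [ee_apply0] using this
    · rintro rfl; ext x; fin_cases x <;> simp [ee, Finsupp.single_apply]
  by_cases h : n = 0
  · subst h; rw [if_pos (hiff.mpr rfl), if_pos rfl]
  · rw [if_neg (fun hh => h (hiff.mp hh)), if_neg h]

lemma sl1_ov1 (f : PowerSeries Rmu) :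
    sl 1 (onVar (1 : Fin 2) f) = PowerSeries.C (R := Rmu) (PowerSeries.coeff (R := Rmu) 1 f) := by
  refine PowerSeries.ext fun n => ?_
  rw [coeff_sl, PowerSeries.coeff_C, MvPowerSeries.coeff_apply]
  show (if ee n 1 = Finsupp.single (1 : Fin 2) (ee n 1 1) then
    PowerSeries.coeff (R := Rmu) (ee n 1 1) f else 0) = _
  rw [ee_apply1]
  have hiff : ee n 1 = Finsupp.single (1 : Fin 2) 1 ↔ n = 0 := by
    constructor
    · intro h; have := DFunLike.congr_fun h 0; simpa [ee_apply0, Finsupp.single_apply] using this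
    · rintro rfl; ext x; fin_cases x <;> simp [ee, Finsupp.single_apply]
  by_cases h : n = 0
  · subst h; rw [if_pos (hiff.mpr rfl), if_pos rfl]
  · rw [if_neg (fun hh => h (hiff.mp hh)), if_neg h]

lemma sl0_two : sl 0 (2 : MvPowerSeries (Fin 2) Rmu) = 2 := by
  rw [show (2 : MvPowerSeries (Fin 2) Rmu) = 1 + 1 from one_add_one_eq_two.symm, sl_add, sl0_one]
  norm_num

lemma sl1_two : sl 1 (2 : MvPowerSeries (Fin 2) Rmu) = 0 := by
  rw [show (2 : MvPowerSeries (Fin 2) Rmu) = 1 + 1 from one_add_one_eq_two.symm, sl_add, sl1_one]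
  norm_num

end Stmt16

open Stmt16

/-- `∂F_T/∂v |_{v=0} = 1 − μ₁u − μ₂u² − 2μ₃s(u) − 2μ₄us(u) − 3μ₆s(u)²`; the left-hand side
is the power series in `u` whose `i`-th coefficient is the coefficient of `u^i v` in `F_T`. -/
theorem statement16
    (s : PowerSeries Rmu) (hs0 : PowerSeries.constantCoeff (R := Rmu) s = 0) (hs : tateEq s)
    (m k n FT : MvPowerSeries (Fin 2) Rmu)
    -- `(u − v)·m = s(u) − s(v)`:
    (hm : (MvPowerSeries.X 0 - MvPowerSeries.X 1) * m = onVar 0 s - onVar 1 s)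
    -- `(u − v)·k = u·s(v) − v·s(u)`:
    (hk : (MvPowerSeries.X 0 - MvPowerSeries.X 1) * k =
      MvPowerSeries.X 0 * onVar 1 s - MvPowerSeries.X 1 * onVar 0 s)
    -- `n = m + uv·Q(m)/W`, i.e. `n·W = m·W + uv·Q(m)`:
    (hn : n * Wk k = m * Wk k + MvPowerSeries.X 0 * MvPowerSeries.X 1 * Qm m)
    -- `F_T = (u + v − uv·P/W)·Q(m)/(Q(n)·W)`, i.e. `F_T·Q(n)·W² = ((u+v)·W − uv·P)·Q(m)`:
    (hFT : FT * (Qm n * Wk k ^ 2) =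
      ((MvPowerSeries.X 0 + MvPowerSeries.X 1) * Wk k -
        MvPowerSeries.X 0 * MvPowerSeries.X 1 * Pmk m k) * Qm m) :
    ∀ i : ℕ, MvPowerSeries.coeff (R := Rmu) (ee i 1) FT =
      PowerSeries.coeff (R := Rmu) i
        (1 - PowerSeries.C (R := Rmu) mu1 * PowerSeries.X - PowerSeries.C (R := Rmu) mu2 * PowerSeries.X ^ 2
          - 2 * PowerSeries.C (R := Rmu) mu3 * s - 2 * PowerSeries.C (R := Rmu) mu4 * PowerSeries.X * s
          - 3 * PowerSeries.C (R := Rmu) mu6 * s ^ 2) := by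
  intro i
  unfold tateEq at hs
  have hant1 : (Finset.HasAntidiagonal.antidiagonal (1 : ℕ)) = {(0, 1), (1, 0)} := rfl
  have hant0 : (Finset.HasAntidiagonal.antidiagonal (0 : ℕ)) = {(0, 0)} := rfl
  have hs1 : PowerSeries.coeff (R := Rmu) 1 s = 0 := by
    conv_lhs => rw [hs]
    simp [PowerSeries.coeff_mul, hant1, hant0, PowerSeries.coeff_X, PowerSeries.coeff_X_pow,
      PowerSeries.coeff_C, pow_two, pow_succ, pow_zero, PowerSeries.coeff_one,
      PowerSeries.coeff_zero_eq_constantCoeff, hs0]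
  have sq2 : ∀ x : MvPowerSeries (Fin 2) Rmu, x ^ 2 = x * x := fun x => sq x
  have cube : ∀ x : MvPowerSeries (Fin 2) Rmu, x ^ 3 = x * x * x := fun x => by ring
  simp only [Wk, Qm, Pmk, sq2, cube] at hn hFT
  have h1 := congrArg (sl 0) hm
  have h3 := congrArg (sl 0) hk
  have h4 := congrArg (sl 1) hk
  have h5 := congrArg (sl 0) hn
  have h6 := congrArg (sl 1) hn
  have h7 := congrArg (sl 0) hFT
  have h8 := congrArg (sl 1) hFT
  simp only [sl_sub, sl_add, sl0_mul, sl1_mul, sl0_X0, sl1_X0, sl0_X1, sl1_X1,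
    sl0_ov0, sl1_ov0, sl0_ov1, sl1_ov1, sl0_one, sl1_one, sl0_C, sl1_C, sl0_two, sl1_two,
    PowerSeries.coeff_zero_eq_constantCoeff, hs0, hs1, map_zero, sub_zero, zero_sub,
    mul_zero, zero_mul, mul_one, one_mul, add_zero, zero_add, neg_zero, neg_mul, mul_neg,
    neg_neg] at h1 h3 h4 h5 h6 h7 h8
  -- basic consequences
  have h1' : PowerSeries.X * sl 0 m = s := by linear_combination h1
  have h3' : PowerSeries.X * sl 0 k = (0 : PowerSeries Rmu) := by linear_combination h3
  have hk0 : sl 0 k = 0 := by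
    have hx : PowerSeries.X * sl 0 k = PowerSeries.X * 0 := by rw [mul_zero]; exact h3'
    exact mul_left_cancel₀ PowerSeries.X_ne_zero hx
  have hm00 : PowerSeries.constantCoeff (R := Rmu) (sl 0 m) = 0 := by
    have h2' := PowerSeries.coeff_succ_X_mul 0 (sl 0 m)
    rw [zero_add, h1', hs1] at h2'
    rw [← PowerSeries.coeff_zero_eq_constantCoeff_apply]
    exact h2'.symm
  have hn0 : sl 0 n = sl 0 m := by
    linear_combination h5 + (sl 0 n - sl 0 m) *
      (PowerSeries.C (R := Rmu) mu3 + PowerSeries.C (R := Rmu) mu6 * sl 0 k) * hk0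
  -- the unit Q0
  have hQcc : PowerSeries.constantCoeff (R := Rmu)
      (1 + PowerSeries.C (R := Rmu) mu2 * sl 0 m + PowerSeries.C (R := Rmu) mu4 * (sl 0 m * sl 0 m)
        + PowerSeries.C (R := Rmu) mu6 * (sl 0 m * (sl 0 m * sl 0 m))) = 1 := by
    simp [map_add, map_mul, map_one, hm00, PowerSeries.constantCoeff_C]
  have hQ0ne : (1 + PowerSeries.C (R := Rmu) mu2 * sl 0 m + PowerSeries.C (R := Rmu) mu4 * (sl 0 m * sl 0 m)
        + PowerSeries.C (R := Rmu) mu6 * (sl 0 m * (sl 0 m * sl 0 m))) ≠ (0 : PowerSeries Rmu) := by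
    intro h
    rw [h, map_zero] at hQcc
    exact zero_ne_one hQcc
  rw [hk0] at h4 h6 h7 h8
  rw [hn0] at h6 h7 h8
  have hFT0 : sl 0 FT = PowerSeries.X := by
    apply mul_right_cancel₀ hQ0ne
    linear_combination h7
  rw [hFT0] at h8
  have key : sl 1 FT =
      1 - PowerSeries.C (R := Rmu) mu1 * PowerSeries.X - PowerSeries.C (R := Rmu) mu2 * PowerSeries.X ^ 2
        - 2 * PowerSeries.C (R := Rmu) mu3 * s - 2 * PowerSeries.C (R := Rmu) mu4 * PowerSeries.X * s
        - 3 * PowerSeries.C (R := Rmu) mu6 * s ^ 2 := by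
    apply mul_right_cancel₀ hQ0ne
    linear_combination h8
      - PowerSeries.X * (PowerSeries.C (R := Rmu) mu2 + 2 * PowerSeries.C (R := Rmu) mu4 * sl 0 m
          + 3 * PowerSeries.C (R := Rmu) mu6 * (sl 0 m * sl 0 m)) * h6
      + PowerSeries.C (R := Rmu) mu3 * (1 + PowerSeries.C (R := Rmu) mu2 * sl 0 m
          + PowerSeries.C (R := Rmu) mu4 * (sl 0 m * sl 0 m)
          + PowerSeries.C (R := Rmu) mu6 * (sl 0 m * (sl 0 m * sl 0 m))) * h4
      - (PowerSeries.C (R := Rmu) mu3 + 2 * PowerSeries.C (R := Rmu) mu4 * PowerSeries.X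
          + 3 * PowerSeries.C (R := Rmu) mu6 * (s + sl 0 m * PowerSeries.X))
        * (1 + PowerSeries.C (R := Rmu) mu2 * sl 0 m + PowerSeries.C (R := Rmu) mu4 * (sl 0 m * sl 0 m)
          + PowerSeries.C (R := Rmu) mu6 * (sl 0 m * (sl 0 m * sl 0 m))) * h1'
  rw [← key, coeff_sl]

end
end

section
/- Consider the specialization of the Tate formal group at μ1 = 0, μ3 = 0, μ6 = 0, i.e. the image of F_T(u,v) under the ring homomorphism ℤ[μ1,μ2,μ3,μ4,μ6] → ℤ[μ2,μ4] sending μ1, μ3, μ6 to 0 and fixing μ2, μ4. Then there exists a unique power series B(u) ∈ ℤ[μ2,μ4][[u]] with B(0) = 1 and B(u)² = (1 − μ2u²)² − 4μ4u⁴; this B satisfies B'(0) = 0, and the specialized Tate formal group equals (u² − v²)/(uB(v) − vB(u)). -/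
noncomputable section

/-- The specialization homomorphism `μ₁, μ₃, μ₆ ↦ 0`, `μ₂ ↦ μ₂`, `μ₄ ↦ μ₄`. -/
def spec2 : Rmu →+* MvPolynomial (Fin 2) ℤ :=
  (MvPolynomial.aeval ![0, MvPolynomial.X 0, 0, MvPolynomial.X 1, 0]).toRingHom

namespace OnVarAux

variable {R S : Type*} [CommRing R] [CommRing S] {σ : Type*} [DecidableEq σ] (i : σ)

lemma coeff_onVar (f : PowerSeries R) (d : σ →₀ ℕ) :
    MvPowerSeries.coeff (R := R) d (onVar i f) =
      if d = Finsupp.single i (d i) then PowerSeries.coeff (R := R) (d i) f else 0 := rfl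

lemma coeff_onVar_single (f : PowerSeries R) (a : ℕ) :
    MvPowerSeries.coeff (R := R) (Finsupp.single i a) (onVar i f) = PowerSeries.coeff (R := R) a f := by
  rw [coeff_onVar, if_pos (by rw [Finsupp.single_eq_same])]
  rw [Finsupp.single_eq_same]

lemma onVar_zero : onVar i (0 : PowerSeries R) = 0 := by
  ext d
  rw [coeff_onVar]
  split_ifs <;> simp

lemma onVar_add (f g : PowerSeries R) : onVar i (f + g) = onVar i f + onVar i g := by
  ext d
  rw [map_add, coeff_onVar, coeff_onVar, coeff_onVar]
  split_ifs <;> simp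

lemma onVar_C (r : R) : onVar i (PowerSeries.C (R := R) r) = MvPowerSeries.C (σ := σ) (R := R) r := by
  ext d
  rw [coeff_onVar, MvPowerSeries.coeff_C, PowerSeries.coeff_C]
  rcases eq_or_ne d 0 with rfl | hd0
  · simp
  · rw [if_neg hd0]
    split_ifs with h1 h2
    · exact absurd (by rw [h1, h2, Finsupp.single_zero]) hd0
    · rfl
    · rfl

lemma onVar_one : onVar i (1 : PowerSeries R) = 1 := by
  simpa using onVar_C i (1 : R)

lemma onVar_X : onVar i (PowerSeries.X : PowerSeries R) = MvPowerSeries.X i := by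
  ext d
  rw [coeff_onVar, MvPowerSeries.coeff_X, PowerSeries.coeff_X]
  split_ifs with h1 h2 h3 h4 h5
  · rfl
  · exact absurd (h2 ▸ h1) h3
  · exact absurd (by rw [h4, Finsupp.single_eq_same]) h2
  · rfl
  · exact absurd (by rw [h5, Finsupp.single_eq_same]) h1
  · rfl

lemma onVar_mul (f g : PowerSeries R) : onVar i (f * g) = onVar i f * onVar i g := by
  ext d
  rw [MvPowerSeries.coeff_mul, coeff_onVar]
  split_ifs with h1
  · rw [PowerSeries.coeff_mul]
    conv_rhs => rw [h1]
    rw [Finsupp.antidiagonal_single, Finset.sum_map]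
    refine Finset.sum_congr rfl fun p _ => ?_
    simp only [Function.Embedding.coe_prodMap, Function.Embedding.coeFn_mk, Prod.map_fst,
      Prod.map_snd]
    rw [coeff_onVar_single, coeff_onVar_single]
  · refine (Finset.sum_eq_zero fun p hp => ?_).symm
    rw [Finset.HasAntidiagonal.mem_antidiagonal] at hp
    rw [coeff_onVar, coeff_onVar]
    split_ifs with h2 h3
    · refine absurd ?_ h1
      rw [← hp, Finsupp.add_apply]
      conv_lhs => rw [h2, h3]
      rw [Finsupp.single_add]
    · exact mul_zero _
    · exact zero_mul _
    · exact zero_mul _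

def onVarHom (i : σ) : PowerSeries R →+* MvPowerSeries σ R where
  toFun := onVar i
  map_one' := onVar_one i
  map_mul' := onVar_mul i
  map_zero' := onVar_zero i
  map_add' := onVar_add i

lemma onVar_sub (f g : PowerSeries R) : onVar i (f - g) = onVar i f - onVar i g :=
  map_sub (onVarHom i) f g

lemma onVar_pow (f : PowerSeries R) (n : ℕ) : onVar i (f ^ n) = onVar i f ^ n :=
  map_pow (onVarHom i) f n

lemma onVar_two : onVar i (2 : PowerSeries R) = 2 := by
  rw [show (2 : PowerSeries R) = 1 + 1 by norm_num, onVar_add, onVar_one]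
  norm_num

lemma onVar_ofNat (n : ℕ) [n.AtLeastTwo] :
    onVar i (OfNat.ofNat n : PowerSeries R) = OfNat.ofNat n :=
  map_ofNat (onVarHom i) n

lemma onVar_map (φ : R →+* S) (f : PowerSeries R) :
    onVar i (PowerSeries.map φ f) = MvPowerSeries.map (σ := σ) φ (onVar i f) := by
  ext d
  rw [MvPowerSeries.coeff_map, coeff_onVar, coeff_onVar, PowerSeries.coeff_map]
  split_ifs
  · rfl
  · rw [map_zero]

end OnVarAux


open OnVarAux

lemma spec2_mu1 : spec2 mu1 = 0 := by simp [spec2, mu1]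
lemma spec2_mu2 : spec2 mu2 = MvPolynomial.X 0 := by simp [spec2, mu2]
lemma spec2_mu3 : spec2 mu3 = 0 := by simp [spec2, mu3]
lemma spec2_mu4 : spec2 mu4 = MvPolynomial.X 1 := by simp [spec2, mu4]
lemma spec2_mu6 : spec2 mu6 = 0 := by simp [spec2, mu6]

/-- the candidate square root -/
def B0 (s : PowerSeries Rmu) : PowerSeries (MvPolynomial (Fin 2) ℤ) :=
  1 - PowerSeries.C (R := MvPolynomial (Fin 2) ℤ) (MvPolynomial.X 0) * PowerSeries.X ^ 2
    - 2 * PowerSeries.C (R := MvPolynomial (Fin 2) ℤ) (MvPolynomial.X 1) * PowerSeries.X *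
      PowerSeries.map spec2 s

lemma curve1 (s : PowerSeries Rmu) (hs : tateEq s) :
    PowerSeries.map spec2 s = PowerSeries.X ^ 3
      + PowerSeries.C (R := MvPolynomial (Fin 2) ℤ) (MvPolynomial.X 0) * PowerSeries.X ^ 2 *
          PowerSeries.map spec2 s
      + PowerSeries.C (R := MvPolynomial (Fin 2) ℤ) (MvPolynomial.X 1) * PowerSeries.X *
          (PowerSeries.map spec2 s) ^ 2 := by
  have h := congrArg (PowerSeries.map spec2) hs
  simp only [map_add, map_mul, map_pow, PowerSeries.map_X, PowerSeries.map_C, spec2_mu1,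
    spec2_mu2, spec2_mu3, spec2_mu4, spec2_mu6, map_zero, zero_mul, add_zero] at h
  linear_combination h

lemma B0_const (s : PowerSeries Rmu) (hs0 : PowerSeries.constantCoeff (R := Rmu) s = 0) :
    PowerSeries.constantCoeff (R := MvPolynomial (Fin 2) ℤ) (B0 s) = 1 := by
  simp [B0, hs0, MvPowerSeries.constantCoeff_map]

lemma B0_sq (s : PowerSeries Rmu) (hs : tateEq s) :
    (B0 s) ^ 2 = (1 - PowerSeries.C (R := MvPolynomial (Fin 2) ℤ) (MvPolynomial.X 0) *
        PowerSeries.X ^ 2) ^ 2 -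
      4 * PowerSeries.C (R := MvPolynomial (Fin 2) ℤ) (MvPolynomial.X 1) * PowerSeries.X ^ 4 := by
  rw [B0]
  linear_combination (-(4 * PowerSeries.C (R := MvPolynomial (Fin 2) ℤ) (MvPolynomial.X 1) *
    PowerSeries.X)) * curve1 s hs

lemma B0_uniq (s : PowerSeries Rmu) (hs0 : PowerSeries.constantCoeff (R := Rmu) s = 0) (hs : tateEq s)
    (y : PowerSeries (MvPolynomial (Fin 2) ℤ))
    (hy1 : PowerSeries.constantCoeff (R := MvPolynomial (Fin 2) ℤ) y = 1)
    (hy2 : y ^ 2 = (1 - PowerSeries.C (R := MvPolynomial (Fin 2) ℤ) (MvPolynomial.X 0) *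
        PowerSeries.X ^ 2) ^ 2 -
      4 * PowerSeries.C (R := MvPolynomial (Fin 2) ℤ) (MvPolynomial.X 1) * PowerSeries.X ^ 4) :
    y = B0 s := by
  have h2 : (y - B0 s) * (y + B0 s) = 0 := by linear_combination hy2 - B0_sq s hs
  rcases mul_eq_zero.mp h2 with h | h
  · exact sub_eq_zero.mp h
  · exfalso
    have h0 := congrArg (PowerSeries.constantCoeff (R := MvPolynomial (Fin 2) ℤ)) h
    rw [map_add, hy1] at h0
    rw [B0_const s hs0] at h0
    norm_num at h0

lemma B0_coeff_one (s : PowerSeries Rmu) (hs0 : PowerSeries.constantCoeff (R := Rmu) s = 0) :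
    PowerSeries.coeff (R := MvPolynomial (Fin 2) ℤ) 1 (B0 s) = 0 := by
  have hX : PowerSeries.coeff (R := MvPolynomial (Fin 2) ℤ) 1
      (PowerSeries.X * PowerSeries.map spec2 s) = 0 := by
    have := PowerSeries.coeff_succ_X_mul 0 (PowerSeries.map spec2 s)
    simpa [hs0, MvPowerSeries.constantCoeff_map] using this
  rw [B0, show (2 : PowerSeries (MvPolynomial (Fin 2) ℤ)) *
      PowerSeries.C (R := MvPolynomial (Fin 2) ℤ) (MvPolynomial.X 1) * PowerSeries.X *
      PowerSeries.map spec2 s =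
    PowerSeries.C (R := MvPolynomial (Fin 2) ℤ) (2 * MvPolynomial.X 1) *
      (PowerSeries.X * PowerSeries.map spec2 s) by rw [map_mul, map_ofNat]; ring]
  rw [map_sub, map_sub]
  simp [PowerSeries.coeff_one, PowerSeries.coeff_C_mul, PowerSeries.coeff_X_pow, mul_assoc, hX]


section Alg
variable {S : Type*} [CommRing S] [NoZeroDivisors S]

lemma algAB (U V M K A B : S) (hUV : U - V ≠ 0)
    (hm2 : (U - V) * M = A - B) (hk2 : (U - V) * K = U * B - V * A) :
    A = U * M + K ∧ B = V * M + K := by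
  constructor
  · have h : (U - V) * (U * M + K) = (U - V) * A := by linear_combination U * hm2 + hk2
    exact (mul_left_cancel₀ hUV h).symm
  · have h : (U - V) * (V * M + K) = (U - V) * B := by linear_combination V * hm2 + hk2
    exact (mul_left_cancel₀ hUV h).symm

lemma algG (U V M K A B c2 c4 : S) (hUV : U - V ≠ 0)
    (hm2 : (U - V) * M = A - B) (hk2 : (U - V) * K = U * B - V * A)
    (cA : A = U^3 + c2*U^2*A + c4*U*A^2) (cB : B = V^3 + c2*V^2*B + c4*V*B^2) :
    K + U*V*(U+V) + c2*(U*V)*((U+V)*M+K) + c4*(U*V)*((U+V)*M^2 + 2*M*K) = 0 := by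
  obtain ⟨hA, hB⟩ := algAB U V M K A B hUV hm2 hk2
  rw [hA] at cA
  rw [hB] at cB
  have h : (U - V) * (K + U*V*(U+V) + c2*(U*V)*((U+V)*M+K)
      + c4*(U*V)*((U+V)*M^2 + 2*M*K)) = 0 := by
    linear_combination U * cB - V * cA
  exact (mul_eq_zero.mp h).resolve_left hUV

lemma algR1 (U V M K A B c2 c4 : S) (hUV : U - V ≠ 0)
    (hm2 : (U - V) * M = A - B) (hk2 : (U - V) * K = U * B - V * A)
    (cA : A = U^3 + c2*U^2*A + c4*U*A^2) (cB : B = V^3 + c2*V^2*B + c4*V*B^2) :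
    M = (U^2+U*V+V^2)*(1+c2*M+c4*M^2) + c2*(U+V)*K + 2*c4*(U+V)*M*K + c4*K^2 := by
  obtain ⟨hA, hB⟩ := algAB U V M K A B hUV hm2 hk2
  rw [hA] at cA
  rw [hB] at cB
  have h : (U - V) * (M - ((U^2+U*V+V^2)*(1+c2*M+c4*M^2) + c2*(U+V)*K
      + 2*c4*(U+V)*M*K + c4*K^2)) = 0 := by
    linear_combination cA - cB
  have h2 := (mul_eq_zero.mp h).resolve_left hUV
  linear_combination h2
lemma algMain (U V M K N F c2 c4 : S)
    (hG : K + U*V*(U+V) + c2*(U*V)*((U+V)*M+K) + c4*(U*V)*((U+V)*M^2 + 2*M*K) = 0)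
    (hn2 : N = M + U*V*(1+c2*M+c4*M^2))
    (hFT : F * (1 + c2*N + c4*N^2) = ((U+V) - U*V*(c4*K)) * (1+c2*M+c4*M^2))
    (hQN : (1 + c2*N + c4*N^2) ≠ 0) :
    F * (1 + c2*(U*V) + 2*c4*(U*V)*M) = U + V := by
  apply mul_right_cancel₀ hQN
  linear_combination (1 + c2*(U*V) + 2*c4*(U*V)*M) * hFT
    + (-(c4*(U*V)*(1+c2*M+c4*M^2))) * hG
    + (-((U+V)*(c2+c4*(N+(M+U*V*(1+c2*M+c4*M^2)))))) * hn2

end Alg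

/-- Under the specialization `μ₁ = μ₃ = μ₆ = 0` there is a unique power series `B(u)` over
`ℤ[μ₂, μ₄]` with `B(0) = 1` and `B(u)² = (1 − μ₂u²)² − 4μ₄u⁴`; it satisfies `B'(0) = 0` and
the specialized Tate formal group equals `(u² − v²)/(uB(v) − vB(u))`. -/
theorem statement17
    (s : PowerSeries Rmu) (hs0 : PowerSeries.constantCoeff (R := Rmu) s = 0) (hs : tateEq s)
    (m k n FT : MvPowerSeries (Fin 2) Rmu)
    -- `(u − v)·m = s(u) − s(v)`:
    (hm : (MvPowerSeries.X 0 - MvPowerSeries.X 1) * m = onVar 0 s - onVar 1 s)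
    -- `(u − v)·k = u·s(v) − v·s(u)`:
    (hk : (MvPowerSeries.X 0 - MvPowerSeries.X 1) * k =
      MvPowerSeries.X 0 * onVar 1 s - MvPowerSeries.X 1 * onVar 0 s)
    -- `n = m + uv·Q(m)/W`, i.e. `n·W = m·W + uv·Q(m)`:
    (hn : n * Wk k = m * Wk k + MvPowerSeries.X 0 * MvPowerSeries.X 1 * Qm m)
    -- `F_T = (u + v − uv·P/W)·Q(m)/(Q(n)·W)`, i.e. `F_T·Q(n)·W² = ((u+v)·W − uv·P)·Q(m)`:
    (hFT : FT * (Qm n * Wk k ^ 2) =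
      ((MvPowerSeries.X 0 + MvPowerSeries.X 1) * Wk k -
        MvPowerSeries.X 0 * MvPowerSeries.X 1 * Pmk m k) * Qm m) :
    (∃! Bs : PowerSeries (MvPolynomial (Fin 2) ℤ),
      PowerSeries.constantCoeff (R := MvPolynomial (Fin 2) ℤ) Bs = 1 ∧
      Bs ^ 2 = (1 - PowerSeries.C (R := MvPolynomial (Fin 2) ℤ) (MvPolynomial.X 0) *
          PowerSeries.X ^ 2) ^ 2 -
        4 * PowerSeries.C (R := MvPolynomial (Fin 2) ℤ) (MvPolynomial.X 1) * PowerSeries.X ^ 4) ∧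
    ∀ Bs : PowerSeries (MvPolynomial (Fin 2) ℤ),
      PowerSeries.constantCoeff (R := MvPolynomial (Fin 2) ℤ) Bs = 1 →
      Bs ^ 2 = (1 - PowerSeries.C (R := MvPolynomial (Fin 2) ℤ) (MvPolynomial.X 0) *
          PowerSeries.X ^ 2) ^ 2 -
        4 * PowerSeries.C (R := MvPolynomial (Fin 2) ℤ) (MvPolynomial.X 1) * PowerSeries.X ^ 4 →
      -- `B'(0) = 0`:
      PowerSeries.coeff (R := MvPolynomial (Fin 2) ℤ) 1 Bs = 0 ∧
      -- the specialized Tate formal group is `(u² − v²)/(uB(v) − vB(u))`: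
      MvPowerSeries.map (σ := Fin 2) spec2 FT *
          (MvPowerSeries.X 0 * onVar 1 Bs - MvPowerSeries.X 1 * onVar 0 Bs) =
        (MvPowerSeries.X 0) ^ 2 - (MvPowerSeries.X 1) ^ 2 := by
  classical
  have hs' := hs
  unfold tateEq at hs'
  have curveOV : ∀ i : Fin 2, onVar i s = (MvPowerSeries.X i)^3
      + MvPowerSeries.C (σ := Fin 2) (R := Rmu) mu1 * MvPowerSeries.X i * onVar i s
      + MvPowerSeries.C (σ := Fin 2) (R := Rmu) mu2 * (MvPowerSeries.X i)^2 * onVar i s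
      + MvPowerSeries.C (σ := Fin 2) (R := Rmu) mu3 * (onVar i s)^2
      + MvPowerSeries.C (σ := Fin 2) (R := Rmu) mu4 * MvPowerSeries.X i * (onVar i s)^2
      + MvPowerSeries.C (σ := Fin 2) (R := Rmu) mu6 * (onVar i s)^3 := by
    intro i
    have h := congrArg (onVar (σ := Fin 2) i) hs'
    simpa only [onVar_add, onVar_mul, onVar_pow, onVar_X, onVar_C] using h
  have curveA : ∀ i : Fin 2, (MvPowerSeries.map (σ := Fin 2) spec2 (onVar i s)) =
      (MvPowerSeries.X i)^3 + (MvPowerSeries.C (σ := Fin 2) (R := MvPolynomial (Fin 2) ℤ) (MvPolynomial.X 0)) * (MvPowerSeries.X i)^2 * (MvPowerSeries.map (σ := Fin 2) spec2 (onVar i s))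
      + (MvPowerSeries.C (σ := Fin 2) (R := MvPolynomial (Fin 2) ℤ) (MvPolynomial.X 1)) * (MvPowerSeries.X i) * ((MvPowerSeries.map (σ := Fin 2) spec2 (onVar i s)))^2 := by
    intro i
    have h := congrArg (MvPowerSeries.map (σ := Fin 2) spec2) (curveOV i)
    simp only [map_add, map_mul, map_pow, MvPowerSeries.map_X, MvPowerSeries.map_C,
      spec2_mu1, spec2_mu2, spec2_mu3, spec2_mu4, spec2_mu6, map_zero, zero_mul, add_zero,
      zero_add, mul_zero] at h
    linear_combination h
  have hUVne : (MvPowerSeries.X 0 : MvPowerSeries (Fin 2) (MvPolynomial (Fin 2) ℤ)) - (MvPowerSeries.X 1 : MvPowerSeries (Fin 2) (MvPolynomial (Fin 2) ℤ)) ≠ 0 := by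
    intro h0
    have h := congrArg (MvPowerSeries.coeff (R := MvPolynomial (Fin 2) ℤ) (Finsupp.single 0 1)) h0
    simp [MvPowerSeries.coeff_X, Finsupp.single_eq_single_iff] at h
  have hm2 : ((MvPowerSeries.X 0 : MvPowerSeries (Fin 2) (MvPolynomial (Fin 2) ℤ)) - (MvPowerSeries.X 1 : MvPowerSeries (Fin 2) (MvPolynomial (Fin 2) ℤ))) * (MvPowerSeries.map (σ := Fin 2) spec2 (m)) = (MvPowerSeries.map (σ := Fin 2) spec2 (onVar 0 s)) - (MvPowerSeries.map (σ := Fin 2) spec2 (onVar 1 s)) := by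
    have h := congrArg (MvPowerSeries.map (σ := Fin 2) spec2) hm
    simpa only [map_mul, map_sub, MvPowerSeries.map_X] using h
  have hk2 : ((MvPowerSeries.X 0 : MvPowerSeries (Fin 2) (MvPolynomial (Fin 2) ℤ)) - (MvPowerSeries.X 1 : MvPowerSeries (Fin 2) (MvPolynomial (Fin 2) ℤ))) * (MvPowerSeries.map (σ := Fin 2) spec2 (k)) = (MvPowerSeries.X 0 : MvPowerSeries (Fin 2) (MvPolynomial (Fin 2) ℤ)) * (MvPowerSeries.map (σ := Fin 2) spec2 (onVar 1 s)) - (MvPowerSeries.X 1 : MvPowerSeries (Fin 2) (MvPolynomial (Fin 2) ℤ)) * (MvPowerSeries.map (σ := Fin 2) spec2 (onVar 0 s)) := by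
    have h := congrArg (MvPowerSeries.map (σ := Fin 2) spec2) hk
    simpa only [map_mul, map_sub, MvPowerSeries.map_X] using h
  have hW : (MvPowerSeries.map (σ := Fin 2) spec2 (Wk k)) = 1 := by
    simp only [Wk, map_sub, map_mul, map_pow, map_one, MvPowerSeries.map_C, spec2_mu3,
      spec2_mu6, map_zero, zero_mul, sub_zero]
  have hQ : ∀ x : MvPowerSeries (Fin 2) Rmu, (MvPowerSeries.map (σ := Fin 2) spec2 (Qm x)) =
      1 + (MvPowerSeries.C (σ := Fin 2) (R := MvPolynomial (Fin 2) ℤ) (MvPolynomial.X 0)) * (MvPowerSeries.map (σ := Fin 2) spec2 (x)) + (MvPowerSeries.C (σ := Fin 2) (R := MvPolynomial (Fin 2) ℤ) (MvPolynomial.X 1)) * ((MvPowerSeries.map (σ := Fin 2) spec2 (x)))^2 := by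
    intro x
    simp only [Qm, map_add, map_mul, map_pow, map_one, MvPowerSeries.map_C, spec2_mu2,
      spec2_mu4, spec2_mu6, map_zero, zero_mul, add_zero]
  have hPk : (MvPowerSeries.map (σ := Fin 2) spec2 (Pmk m k)) = (MvPowerSeries.C (σ := Fin 2) (R := MvPolynomial (Fin 2) ℤ) (MvPolynomial.X 1)) * (MvPowerSeries.map (σ := Fin 2) spec2 (k)) := by
    simp only [Pmk, map_add, map_mul, MvPowerSeries.map_C, spec2_mu1, spec2_mu3, spec2_mu4,
      spec2_mu6, map_zero, map_ofNat, zero_mul, mul_zero, add_zero, zero_add]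
  have hn2 : (MvPowerSeries.map (σ := Fin 2) spec2 (n)) = (MvPowerSeries.map (σ := Fin 2) spec2 (m)) + (MvPowerSeries.X 0 : MvPowerSeries (Fin 2) (MvPolynomial (Fin 2) ℤ)) * (MvPowerSeries.X 1 : MvPowerSeries (Fin 2) (MvPolynomial (Fin 2) ℤ)) * (1 + (MvPowerSeries.C (σ := Fin 2) (R := MvPolynomial (Fin 2) ℤ) (MvPolynomial.X 0)) * (MvPowerSeries.map (σ := Fin 2) spec2 (m)) + (MvPowerSeries.C (σ := Fin 2) (R := MvPolynomial (Fin 2) ℤ) (MvPolynomial.X 1)) * (MvPowerSeries.map (σ := Fin 2) spec2 (m))^2) := by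
    have h := congrArg (MvPowerSeries.map (σ := Fin 2) spec2) hn
    simp only [map_mul, map_add, MvPowerSeries.map_X, hW, hQ, mul_one] at h
    exact h
  have hFT2 : (MvPowerSeries.map (σ := Fin 2) spec2 (FT)) * (1 + (MvPowerSeries.C (σ := Fin 2) (R := MvPolynomial (Fin 2) ℤ) (MvPolynomial.X 0)) * (MvPowerSeries.map (σ := Fin 2) spec2 (n)) + (MvPowerSeries.C (σ := Fin 2) (R := MvPolynomial (Fin 2) ℤ) (MvPolynomial.X 1)) * (MvPowerSeries.map (σ := Fin 2) spec2 (n))^2) =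
      (((MvPowerSeries.X 0 : MvPowerSeries (Fin 2) (MvPolynomial (Fin 2) ℤ)) + (MvPowerSeries.X 1 : MvPowerSeries (Fin 2) (MvPolynomial (Fin 2) ℤ))) - (MvPowerSeries.X 0 : MvPowerSeries (Fin 2) (MvPolynomial (Fin 2) ℤ)) * (MvPowerSeries.X 1 : MvPowerSeries (Fin 2) (MvPolynomial (Fin 2) ℤ)) * ((MvPowerSeries.C (σ := Fin 2) (R := MvPolynomial (Fin 2) ℤ) (MvPolynomial.X 1)) * (MvPowerSeries.map (σ := Fin 2) spec2 (k)))) * (1 + (MvPowerSeries.C (σ := Fin 2) (R := MvPolynomial (Fin 2) ℤ) (MvPolynomial.X 0)) * (MvPowerSeries.map (σ := Fin 2) spec2 (m)) + (MvPowerSeries.C (σ := Fin 2) (R := MvPolynomial (Fin 2) ℤ) (MvPolynomial.X 1)) * (MvPowerSeries.map (σ := Fin 2) spec2 (m))^2) := by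
    have h := congrArg (MvPowerSeries.map (σ := Fin 2) spec2) hFT
    simp only [map_mul, map_sub, map_add, map_pow, MvPowerSeries.map_X, hW, hQ, hPk,
      one_pow, mul_one] at h
    linear_combination h
  have hG := algG (MvPowerSeries.X 0 : MvPowerSeries (Fin 2) (MvPolynomial (Fin 2) ℤ)) (MvPowerSeries.X 1 : MvPowerSeries (Fin 2) (MvPolynomial (Fin 2) ℤ)) (MvPowerSeries.map (σ := Fin 2) spec2 (m)) (MvPowerSeries.map (σ := Fin 2) spec2 (k)) (MvPowerSeries.map (σ := Fin 2) spec2 (onVar 0 s)) (MvPowerSeries.map (σ := Fin 2) spec2 (onVar 1 s)) (MvPowerSeries.C (σ := Fin 2) (R := MvPolynomial (Fin 2) ℤ) (MvPolynomial.X 0)) (MvPowerSeries.C (σ := Fin 2) (R := MvPolynomial (Fin 2) ℤ) (MvPolynomial.X 1)) hUVne hm2 hk2 (curveA 0) (curveA 1)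
  have hR1 := algR1 (MvPowerSeries.X 0 : MvPowerSeries (Fin 2) (MvPolynomial (Fin 2) ℤ)) (MvPowerSeries.X 1 : MvPowerSeries (Fin 2) (MvPolynomial (Fin 2) ℤ)) (MvPowerSeries.map (σ := Fin 2) spec2 (m)) (MvPowerSeries.map (σ := Fin 2) spec2 (k)) (MvPowerSeries.map (σ := Fin 2) spec2 (onVar 0 s)) (MvPowerSeries.map (σ := Fin 2) spec2 (onVar 1 s)) (MvPowerSeries.C (σ := Fin 2) (R := MvPolynomial (Fin 2) ℤ) (MvPolynomial.X 0)) (MvPowerSeries.C (σ := Fin 2) (R := MvPolynomial (Fin 2) ℤ) (MvPolynomial.X 1)) hUVne hm2 hk2 (curveA 0) (curveA 1)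
  have hK0 : MvPowerSeries.constantCoeff (σ := Fin 2) (R := MvPolynomial (Fin 2) ℤ) (MvPowerSeries.map (σ := Fin 2) spec2 (k)) = 0 := by
    have h := congrArg (MvPowerSeries.constantCoeff (σ := Fin 2) (R := MvPolynomial (Fin 2) ℤ)) hG
    simpa [map_add, map_mul, map_pow, MvPowerSeries.constantCoeff_X] using h
  have hM0 : MvPowerSeries.constantCoeff (σ := Fin 2) (R := MvPolynomial (Fin 2) ℤ) (MvPowerSeries.map (σ := Fin 2) spec2 (m)) = 0 := by
    have h := congrArg (MvPowerSeries.constantCoeff (σ := Fin 2) (R := MvPolynomial (Fin 2) ℤ)) hR1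
    simpa [map_add, map_mul, map_pow, map_one, MvPowerSeries.constantCoeff_X, hK0] using h
  have hN0 : MvPowerSeries.constantCoeff (σ := Fin 2) (R := MvPolynomial (Fin 2) ℤ) (MvPowerSeries.map (σ := Fin 2) spec2 (n)) = 0 := by
    have h := congrArg (MvPowerSeries.constantCoeff (σ := Fin 2) (R := MvPolynomial (Fin 2) ℤ)) hn2
    simpa [map_add, map_mul, map_pow, map_one, MvPowerSeries.constantCoeff_X, hM0] using h
  have hQNne : (1 + (MvPowerSeries.C (σ := Fin 2) (R := MvPolynomial (Fin 2) ℤ) (MvPolynomial.X 0)) * (MvPowerSeries.map (σ := Fin 2) spec2 (n)) + (MvPowerSeries.C (σ := Fin 2) (R := MvPolynomial (Fin 2) ℤ) (MvPolynomial.X 1)) * (MvPowerSeries.map (σ := Fin 2) spec2 (n))^2) ≠ 0 := by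
    intro h0
    have h := congrArg (MvPowerSeries.constantCoeff (σ := Fin 2) (R := MvPolynomial (Fin 2) ℤ)) h0
    simp [map_add, map_mul, map_pow, map_one, MvPowerSeries.constantCoeff_C, hN0] at h
  have key2 := algMain (MvPowerSeries.X 0 : MvPowerSeries (Fin 2) (MvPolynomial (Fin 2) ℤ)) (MvPowerSeries.X 1 : MvPowerSeries (Fin 2) (MvPolynomial (Fin 2) ℤ)) (MvPowerSeries.map (σ := Fin 2) spec2 (m)) (MvPowerSeries.map (σ := Fin 2) spec2 (k)) (MvPowerSeries.map (σ := Fin 2) spec2 (n)) (MvPowerSeries.map (σ := Fin 2) spec2 (FT)) (MvPowerSeries.C (σ := Fin 2) (R := MvPolynomial (Fin 2) ℤ) (MvPolynomial.X 0)) (MvPowerSeries.C (σ := Fin 2) (R := MvPolynomial (Fin 2) ℤ) (MvPolynomial.X 1)) hG hn2 hFT2 hQNne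
  refine ⟨⟨B0 s, ⟨B0_const s hs0, B0_sq s hs⟩, fun y hy => B0_uniq s hs0 hs y hy.1 hy.2⟩, ?_⟩
  intro Bs hc hsq
  have hBs : Bs = B0 s := B0_uniq s hs0 hs Bs hc hsq
  subst hBs
  refine ⟨B0_coeff_one s hs0, ?_⟩
  have hov : ∀ i : Fin 2, onVar i (B0 s) =
      1 - (MvPowerSeries.C (σ := Fin 2) (R := MvPolynomial (Fin 2) ℤ) (MvPolynomial.X 0)) * (MvPowerSeries.X i)^2 - 2 * (MvPowerSeries.C (σ := Fin 2) (R := MvPolynomial (Fin 2) ℤ) (MvPolynomial.X 1)) * (MvPowerSeries.X i) * (MvPowerSeries.map (σ := Fin 2) spec2 (onVar i s)) := by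
    intro i
    simp only [B0, onVar_sub, onVar_mul, onVar_pow, onVar_one, onVar_X, onVar_C,
      onVar_ofNat, onVar_two, onVar_map]
  have keyB : (MvPowerSeries.X 0 : MvPowerSeries (Fin 2) (MvPolynomial (Fin 2) ℤ)) * onVar 1 (B0 s) - (MvPowerSeries.X 1 : MvPowerSeries (Fin 2) (MvPolynomial (Fin 2) ℤ)) * onVar 0 (B0 s) =
      ((MvPowerSeries.X 0 : MvPowerSeries (Fin 2) (MvPolynomial (Fin 2) ℤ)) - (MvPowerSeries.X 1 : MvPowerSeries (Fin 2) (MvPolynomial (Fin 2) ℤ))) * (1 + (MvPowerSeries.C (σ := Fin 2) (R := MvPolynomial (Fin 2) ℤ) (MvPolynomial.X 0)) * ((MvPowerSeries.X 0 : MvPowerSeries (Fin 2) (MvPolynomial (Fin 2) ℤ)) * (MvPowerSeries.X 1 : MvPowerSeries (Fin 2) (MvPolynomial (Fin 2) ℤ))) + 2 * (MvPowerSeries.C (σ := Fin 2) (R := MvPolynomial (Fin 2) ℤ) (MvPolynomial.X 1)) * ((MvPowerSeries.X 0 : MvPowerSeries (Fin 2) (MvPolynomial (Fin 2) ℤ))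 * (MvPowerSeries.X 1 : MvPowerSeries (Fin 2) (MvPolynomial (Fin 2) ℤ))) * (MvPowerSeries.map (σ := Fin 2) spec2 (m))) := by
    rw [hov 0, hov 1]
    linear_combination (-(2 * (MvPowerSeries.C (σ := Fin 2) (R := MvPolynomial (Fin 2) ℤ) (MvPolynomial.X 1)) * (MvPowerSeries.X 0 : MvPowerSeries (Fin 2) (MvPolynomial (Fin 2) ℤ)) * (MvPowerSeries.X 1 : MvPowerSeries (Fin 2) (MvPolynomial (Fin 2) ℤ)))) * hm2
  rw [keyB]
  linear_combination ((MvPowerSeries.X 0 : MvPowerSeries (Fin 2) (MvPolynomial (Fin 2) ℤ)) - (MvPowerSeries.X 1 : MvPowerSeries (Fin 2) (MvPolynomial (Fin 2) ℤ))) * key2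

end
end
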